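/- Let k be a field of characteristic zero and n ∈ ℕ. Let M = Λ(k^n) ⊗_k k[X₁,…,Xₙ], the tensor product of the exterior algebra of k^n with the polynomial ring in n variables, and let d : M → M be the k-linear map determined by d(ω ⊗ f) = Σᵢ (eᵢ ∧ ω) ⊗ (Xᵢ·f), where eᵢ are the images of the standard basis vectors. Then: (1) d ∘ d = 0; (2) the element τ = (e₁ ∧ ⋯ ∧ eₙ) ⊗ 1 lies in the kernel of d; (3) τ does not lie in the range of d; and (4) the kernel of d is the internal direct sum of the range of d and the line k·τ. In particular the cohomology ker(d)/im(d) is one-dimensional. -/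

import Mathlib

open TensorProduct

/-- The element `τ = (e₁ ∧ ⋯ ∧ eₙ) ⊗ 1` of `Λ(kⁿ) ⊗ k[X₁,…,Xₙ]`. -/
noncomputable def koszulTau (k : Type*) [Field k] (n : ℕ) :
    ExteriorAlgebra k (Fin n → k) ⊗[k] MvPolynomial (Fin n) k :=
  (List.ofFn fun i : Fin n => ExteriorAlgebra.ι k (Pi.single i (1 : k))).prod ⊗ₜ 1

namespace KoszulAux

variable (k : Type*) [Field k] (n : ℕ)

noncomputable def e (i : Fin n) : Fin n → k := Pi.single i 1

noncomputable def eV (i : Fin n) : ExteriorAlgebra k (Fin n → k) :=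
  ExteriorAlgebra.ι k (e k n i)

noncomputable def cL (i : Fin n) :
    ExteriorAlgebra k (Fin n → k) →ₗ[k] ExteriorAlgebra k (Fin n → k) :=
  CliffordAlgebra.contractLeft (LinearMap.proj i)

lemma cL_ι_mul (i : Fin n) (v : Fin n → k) (x : ExteriorAlgebra k (Fin n → k)) :
    cL k n i (ExteriorAlgebra.ι k v * x) = v i • x - ExteriorAlgebra.ι k v * cL k n i x :=
  CliffordAlgebra.contractLeft_ι_mul _ _ _

lemma cL_one (i : Fin n) : cL k n i 1 = 0 :=
  CliffordAlgebra.contractLeft_one _ _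

end KoszulAux

namespace KoszulAux

variable (k : Type*) [Field k] (n : ℕ)

lemma sum_smul_e (v : Fin n → k) : ∑ i, v i • e k n i = v := by
  funext j
  simp [e, Pi.single_apply, Finset.sum_ite_eq]

lemma ι_eq_sum (v : Fin n → k) :
    ExteriorAlgebra.ι k v = ∑ i, v i • eV k n i := by
  simp only [eV, ← map_smul, ← map_sum, sum_smul_e]

noncomputable def B :
    ExteriorAlgebra k (Fin n → k) →ₗ[k] ExteriorAlgebra k (Fin n → k) :=
  ∑ i, LinearMap.mulLeft k (eV k n i) ∘ₗ cL k n i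

lemma B_apply (x : ExteriorAlgebra k (Fin n → k)) :
    B k n x = ∑ i, eV k n i * cL k n i x := by
  simp [B, LinearMap.sum_apply]

lemma B_one : B k n 1 = 0 := by
  simp [B_apply, cL_one]

lemma B_ι_mul (v : Fin n → k) (x : ExteriorAlgebra k (Fin n → k)) :
    B k n (ExteriorAlgebra.ι k v * x)
      = ExteriorAlgebra.ι k v * x + ExteriorAlgebra.ι k v * B k n x := by
  have swap : ∀ i, eV k n i * (ExteriorAlgebra.ι k v * cL k n i x)
      = -(ExteriorAlgebra.ι k v * (eV k n i * cL k n i x)) := by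
    intro i
    have h := ExteriorAlgebra.ι_add_mul_swap (R := k) (e k n i) v
    have : eV k n i * ExteriorAlgebra.ι k v = -(ExteriorAlgebra.ι k v * eV k n i) := by
      rw [eq_neg_iff_add_eq_zero]; simpa [eV] using h
    rw [← mul_assoc, this, neg_mul, mul_assoc]
  calc B k n (ExteriorAlgebra.ι k v * x)
      = ∑ i, eV k n i * (v i • x - ExteriorAlgebra.ι k v * cL k n i x) := by
        simp [B_apply, cL_ι_mul]
    _ = ∑ i, (v i • (eV k n i * x) + ExteriorAlgebra.ι k v * (eV k n i * cL k n i x)) := by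
        refine Finset.sum_congr rfl fun i _ => ?_
        rw [mul_sub, swap i, mul_smul_comm]
        abel
    _ = ExteriorAlgebra.ι k v * x + ExteriorAlgebra.ι k v * B k n x := by
        rw [Finset.sum_add_distrib, ← Finset.mul_sum, ← B_apply]
        congr 1
        simp_rw [← smul_mul_assoc]
        rw [← Finset.sum_mul, ← ι_eq_sum]

end KoszulAux

namespace KoszulAux

variable (k : Type*) [Field k] (n : ℕ)

noncomputable def bE (l : List (Fin n)) : ExteriorAlgebra k (Fin n → k) :=
  (l.map (eV k n)).prod

lemma bE_nil : bE k n [] = 1 := rfl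

lemma bE_cons (i : Fin n) (l : List (Fin n)) :
    bE k n (i :: l) = eV k n i * bE k n l := by
  simp [bE]

lemma B_eV_mul (i : Fin n) (x : ExteriorAlgebra k (Fin n → k)) :
    B k n (eV k n i * x) = eV k n i * x + eV k n i * B k n x :=
  B_ι_mul k n (e k n i) x

lemma B_bE (l : List (Fin n)) : B k n (bE k n l) = (l.length : k) • bE k n l := by
  induction l with
  | nil => simp [bE_nil, B_one]
  | cons i l ih =>
    rw [bE_cons, B_eV_mul, ih, mul_smul_comm, ← bE_cons]
    simp only [List.length_cons, Nat.cast_add, Nat.cast_one, add_smul, one_smul]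
    abel

lemma bE_perm {l l' : List (Fin n)} (h : l.Perm l') : ∃ c : k, bE k n l = c • bE k n l' := by
  induction h with
  | nil => exact ⟨1, by simp⟩
  | cons x _ ih =>
    obtain ⟨c, hc⟩ := ih
    exact ⟨c, by rw [bE_cons, hc, mul_smul_comm, bE_cons]⟩
  | swap x y l =>
    refine ⟨-1, ?_⟩
    have h := ExteriorAlgebra.ι_add_mul_swap (R := k) (e k n y) (e k n x)
    have hxy : eV k n y * eV k n x = -(eV k n x * eV k n y) := by
      rw [eq_neg_iff_add_eq_zero]; simpa [eV] using h
    rw [bE_cons, bE_cons, bE_cons, bE_cons, ← mul_assoc, hxy]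
    simp [mul_assoc]
  | trans _ _ ih1 ih2 =>
    obtain ⟨c1, hc1⟩ := ih1
    obtain ⟨c2, hc2⟩ := ih2
    exact ⟨c1 * c2, by rw [hc1, hc2, smul_smul]⟩

lemma bE_dup {l : List (Fin n)} (h : ¬ l.Nodup) : bE k n l = 0 := by
  obtain ⟨x, hx⟩ := List.exists_duplicate_iff_not_nodup.2 h
  rw [List.duplicate_iff_sublist] at hx
  obtain ⟨t, ht⟩ := hx.exists_perm_append
  obtain ⟨c, hc⟩ := bE_perm k n ht
  rw [hc]
  have : bE k n ([x, x] ++ t) = 0 := by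
    simp only [List.cons_append, List.nil_append, bE_cons, ← mul_assoc]
    simp [eV, ExteriorAlgebra.ι_sq_zero]
  rw [this, smul_zero]

lemma bE_len_gt (l : List (Fin n)) (h : n < l.length) : bE k n l = 0 := by
  apply bE_dup
  intro hnd
  exact absurd (by simpa using hnd.length_le_card) (not_le.2 h)

end KoszulAux

namespace KoszulAux

open MvPolynomial

variable (k : Type*) [Field k] (n : ℕ)

noncomputable def Eop : MvPolynomial (Fin n) k →ₗ[k] MvPolynomial (Fin n) k :=
  ∑ i, LinearMap.mulLeft k (X i) ∘ₗ (pderiv i).toLinearMap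

lemma Eop_apply (f : MvPolynomial (Fin n) k) :
    Eop k n f = ∑ i, X i * pderiv i f := by
  simp [Eop, LinearMap.sum_apply]

lemma Eop_monomial (m : Fin n →₀ ℕ) :
    Eop k n (monomial m 1) = ((∑ i, m i : ℕ) : k) • monomial m 1 := by
  rw [Eop_apply]
  have key : ∀ i : Fin n, (X i : MvPolynomial (Fin n) k) * pderiv i (monomial m 1)
      = (m i : k) • monomial m 1 := by
    intro i
    rw [pderiv_monomial, one_mul]
    rcases Nat.eq_zero_or_pos (m i) with h0 | hpos
    · simp [h0]
    · have hsum : Finsupp.single i 1 + (m - Finsupp.single i 1) = m := by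
        ext j
        rcases eq_or_ne j i with rfl | hne
        · simp [Finsupp.single_eq_same]
          omega
        · simp [Finsupp.single_apply, hne, Ne.symm hne]
      rw [X, monomial_mul, one_mul, hsum]
      have : ((m i : k)) • (monomial m) (1:k) = monomial m ((m i : k) • 1) :=
        (map_smul (monomial m) _ _).symm
      rw [this, smul_eq_mul, mul_one]
  rw [Finset.sum_congr rfl fun i _ => key i, ← Finset.sum_smul]
  push_cast
  rfl

end KoszulAux

namespace KoszulAux

open MvPolynomial

variable (k : Type*) [Field k] (n : ℕ)

lemma cL_eV_mul (i j : Fin n) (x : ExteriorAlgebra k (Fin n → k)) :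
    cL k n j (eV k n i * x) = (if j = i then x else 0) - eV k n i * cL k n j x := by
  rw [eV, cL_ι_mul]
  congr 1
  rcases eq_or_ne j i with rfl | hne
  · simp [e]
  · simp [e, Pi.single_eq_of_ne hne, hne]

lemma pderiv_X_mul (i j : Fin n) (f : MvPolynomial (Fin n) k) :
    pderiv j (X i * f) = (if j = i then f else 0) + X i * pderiv j f := by
  rw [pderiv_mul]
  congr 1
  rcases eq_or_ne j i with rfl | hne
  · simp
  · simp [pderiv_X_of_ne (Ne.symm hne), hne]

noncomputable def hop :
    (ExteriorAlgebra k (Fin n → k) ⊗[k] MvPolynomial (Fin n) k) →ₗ[k]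
    (ExteriorAlgebra k (Fin n → k) ⊗[k] MvPolynomial (Fin n) k) :=
  ∑ i, TensorProduct.map (cL k n i) (pderiv i).toLinearMap

lemma hop_tmul (ω : ExteriorAlgebra k (Fin n → k)) (f : MvPolynomial (Fin n) k) :
    hop k n (ω ⊗ₜ f) = ∑ j, cL k n j ω ⊗ₜ pderiv j f := by
  simp [hop, LinearMap.sum_apply]

lemma homotopy
    (d : (ExteriorAlgebra k (Fin n → k) ⊗[k] MvPolynomial (Fin n) k) →ₗ[k]
         (ExteriorAlgebra k (Fin n → k) ⊗[k] MvPolynomial (Fin n) k))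
    (hd : ∀ (ω : ExteriorAlgebra k (Fin n → k)) (f : MvPolynomial (Fin n) k),
      d (ω ⊗ₜ f) = ∑ i, (eV k n i * ω) ⊗ₜ (X i * f))
    (ω : ExteriorAlgebra k (Fin n → k)) (f : MvPolynomial (Fin n) k) :
    d (hop k n (ω ⊗ₜ f)) + hop k n (d (ω ⊗ₜ f))
      = n • (ω ⊗ₜ f) + ω ⊗ₜ Eop k n f - (B k n ω) ⊗ₜ f := by
  have h1 : d (hop k n (ω ⊗ₜ f))
      = ∑ i, ∑ j, (eV k n i * cL k n j ω) ⊗ₜ[k] (X i * pderiv j f) := by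
    rw [hop_tmul, map_sum]
    rw [Finset.sum_congr rfl fun j _ => hd (cL k n j ω) (pderiv j f)]
    exact Finset.sum_comm
  have h2 : hop k n (d (ω ⊗ₜ f))
      = ∑ i, ∑ j, (cL k n j (eV k n i * ω)) ⊗ₜ[k] (pderiv j (X i * f)) := by
    rw [hd, map_sum]
    exact Finset.sum_congr rfl fun i _ => hop_tmul k n _ _
  rw [h1, h2, ← Finset.sum_add_distrib]
  have key : ∀ i : Fin n,
      (∑ j, (eV k n i * cL k n j ω) ⊗ₜ[k] (X i * pderiv j f)
        + ∑ j, (cL k n j (eV k n i * ω)) ⊗ₜ[k] (pderiv j (X i * f)))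
      = ω ⊗ₜ f + ω ⊗ₜ (X i * pderiv i f) - (eV k n i * cL k n i ω) ⊗ₜ f := by
    intro i
    rw [← Finset.sum_add_distrib]
    rw [Finset.sum_eq_single i]
    · rw [cL_eV_mul, pderiv_X_mul, if_pos rfl, if_pos rfl, sub_tmul, tmul_add, tmul_add]
      abel
    · intro j _ hji
      rw [cL_eV_mul, pderiv_X_mul, if_neg hji, if_neg hji, zero_sub, zero_add, neg_tmul]
      abel
    · intro h
      exact absurd (Finset.mem_univ i) h
  rw [Finset.sum_congr rfl fun i _ => key i]
  rw [Finset.sum_sub_distrib, Finset.sum_add_distrib]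
  congr 1
  · congr 1
    · rw [Finset.sum_const, Finset.card_univ, Fintype.card_fin]
    · rw [← tmul_sum, Eop_apply]
  · rw [← sum_tmul, B_apply]

end KoszulAux

namespace KoszulAux

open MvPolynomial

variable (k : Type*) [Field k] (n : ℕ)

noncomputable def bT (l : List (Fin n)) (m : Fin n →₀ ℕ) :
    ExteriorAlgebra k (Fin n → k) ⊗[k] MvPolynomial (Fin n) k :=
  bE k n l ⊗ₜ monomial m 1

noncomputable def cval (l : List (Fin n)) (m : Fin n →₀ ℕ) : k :=
  (n : k) + ((∑ i, m i : ℕ) : k) - (l.length : k)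

lemma G_bT
    (d : (ExteriorAlgebra k (Fin n → k) ⊗[k] MvPolynomial (Fin n) k) →ₗ[k]
         (ExteriorAlgebra k (Fin n → k) ⊗[k] MvPolynomial (Fin n) k))
    (hd : ∀ (ω : ExteriorAlgebra k (Fin n → k)) (f : MvPolynomial (Fin n) k),
      d (ω ⊗ₜ f) = ∑ i, (eV k n i * ω) ⊗ₜ (X i * f))
    (l : List (Fin n)) (m : Fin n →₀ ℕ) :
    d (hop k n (bT k n l m)) + hop k n (d (bT k n l m))
      = cval k n l m • bT k n l m := by
  rw [bT, homotopy k n d hd, Eop_monomial, B_bE, cval]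
  simp only [← Nat.cast_smul_eq_nsmul k, tmul_smul, smul_tmul']
  rw [← add_tmul, ← sub_tmul]
  congr 1
  module

end KoszulAux

namespace KoszulAux

open MvPolynomial

variable (k : Type*) [Field k] (n : ℕ)

lemma bE_span (x : ExteriorAlgebra k (Fin n → k)) :
    x ∈ Submodule.span k (Set.range (bE k n)) := by
  induction x using CliffordAlgebra.induction with
  | algebraMap r =>
    rw [Algebra.algebraMap_eq_smul_one]
    exact Submodule.smul_mem _ _ (Submodule.subset_span ⟨[], rfl⟩)
  | ι v =>
    rw [show (CliffordAlgebra.ι 0) v = ExteriorAlgebra.ι k v from rfl, ι_eq_sum]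
    exact Submodule.sum_mem _ fun i _ => Submodule.smul_mem _ _
      (Submodule.subset_span ⟨[i], by simp [bE]⟩)
  | mul a b ha hb =>
    have hmul : a * b ∈ Submodule.span k (Set.range (bE k n)) *
        Submodule.span k (Set.range (bE k n)) := Submodule.mul_mem_mul ha hb
    rw [Submodule.span_mul_span] at hmul
    refine Submodule.span_le.2 ?_ hmul
    rintro _ ⟨_, ⟨l1, rfl⟩, _, ⟨l2, rfl⟩, rfl⟩
    exact Submodule.subset_span ⟨l1 ++ l2, by simp [bE]⟩
  | add a b ha hb => exact Submodule.add_mem _ ha hb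

lemma poly_span (f : MvPolynomial (Fin n) k) :
    f ∈ Submodule.span k (Set.range fun m : Fin n →₀ ℕ => (monomial m (1:k))) := by
  rw [MvPolynomial.as_sum f]
  refine Submodule.sum_mem _ fun m _ => ?_
  rw [← mul_one (coeff m f), ← smul_eq_mul, (monomial m).map_smul]
  exact Submodule.smul_mem _ _ (Submodule.subset_span ⟨m, rfl⟩)

lemma bT_span (x : ExteriorAlgebra k (Fin n → k) ⊗[k] MvPolynomial (Fin n) k) :
    x ∈ Submodule.span k
        (Set.range fun p : List (Fin n) × (Fin n →₀ ℕ) => bT k n p.1 p.2) := by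
  induction x with
  | zero => exact Submodule.zero_mem _
  | add a b ha hb => exact Submodule.add_mem _ ha hb
  | tmul ω f =>
    have hω := bE_span k n ω
    have hf := poly_span k n f
    induction hω using Submodule.span_induction with
    | mem w hw =>
      obtain ⟨l, rfl⟩ := hw
      induction hf using Submodule.span_induction with
      | mem g hg =>
        obtain ⟨m, rfl⟩ := hg
        exact Submodule.subset_span ⟨(l, m), rfl⟩
      | zero => rw [tmul_zero]; exact Submodule.zero_mem _
      | add g1 g2 _ _ h1 h2 => rw [tmul_add]; exact Submodule.add_mem _ h1 h2
      | smul c g _ hg => rw [tmul_smul]; exact Submodule.smul_mem _ _ hg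
    | zero => rw [zero_tmul]; exact Submodule.zero_mem _
    | add w1 w2 _ _ h1 h2 => rw [add_tmul]; exact Submodule.add_mem _ h1 h2
    | smul c w _ hw => rw [← smul_tmul']; exact Submodule.smul_mem _ _ hw

end KoszulAux

namespace KoszulAux

open MvPolynomial

variable (k : Type*) [Field k] (n : ℕ)

lemma eig_sum_zero {V : Type*} [AddCommGroup V] [Module k V]
    (G : V →ₗ[k] V) (S : Finset k) (x : k → V)
    (hx : ∀ c ∈ S, G (x c) = c • x c)
    (hsum : ∑ c ∈ S, x c = 0) : ∀ c ∈ S, x c = 0 := by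
  classical
  induction S using Finset.induction_on generalizing x with
  | empty => intro c hc; exact absurd hc (Finset.notMem_empty c)
  | @insert a S ha ih =>
    rw [Finset.sum_insert ha] at hsum
    have hS : ∑ c ∈ S, x c = -x a := by linear_combination (norm := abel) hsum
    have hy : ∀ c ∈ S, G ((c - a) • x c) = c • (c - a) • x c := by
      intro c hc
      rw [map_smul, hx c (Finset.mem_insert_of_mem hc), smul_comm]
    have hysum : ∑ c ∈ S, (c - a) • x c = 0 := by
      have hGsum : ∑ c ∈ S, c • x c = -(a • x a) := by
        have : ∑ c ∈ S, c • x c = G (∑ c ∈ S, x c) := by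
          rw [map_sum]
          exact Finset.sum_congr rfl fun c hc =>
            (hx c (Finset.mem_insert_of_mem hc)).symm
        rw [this, hS, map_neg, hx a (Finset.mem_insert_self a S)]
      calc ∑ c ∈ S, (c - a) • x c
          = ∑ c ∈ S, (c • x c) - a • ∑ c ∈ S, x c := by
            rw [Finset.smul_sum, ← Finset.sum_sub_distrib]
            exact Finset.sum_congr rfl fun c _ => by rw [sub_smul]
        _ = 0 := by rw [hGsum, hS, smul_neg]; abel
    have hzS : ∀ c ∈ S, x c = 0 := by
      intro c hc
      have h0 := ih _ hy hysum c hc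
      rcases smul_eq_zero.1 h0 with h | h
      · exact absurd (sub_eq_zero.1 h) (by rintro rfl; exact ha hc)
      · exact h
    have hxa : x a = 0 := by
      rw [Finset.sum_eq_zero hzS, add_zero] at hsum
      exact hsum
    intro c hc
    rcases Finset.mem_insert.1 hc with rfl | hc
    · exact hxa
    · exact hzS c hc

noncomputable def detFam : ∀ i : ℕ, (Fin n → k) [⋀^Fin i]→ₗ[k] k :=
  Pi.single n (Matrix.detRowAlternating : (Fin n → k) [⋀^Fin n]→ₗ[k] k)

noncomputable def ψ : ExteriorAlgebra k (Fin n → k) →ₗ[k] k :=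
  ExteriorAlgebra.liftAlternating (detFam k n)

lemma ψ_top : ψ k n (bE k n (List.finRange n)) = 1 := by
  have h1 : bE k n (List.finRange n) = ExteriorAlgebra.ιMulti k n (e k n) := by
    rw [ExteriorAlgebra.ιMulti_apply, bE, List.ofFn_eq_map]
    rfl
  rw [h1, ψ, ExteriorAlgebra.liftAlternating_apply_ιMulti, detFam, Pi.single_eq_same]
  have h2 : Matrix.of (fun i j => e k n i j) = (1 : Matrix (Fin n) (Fin n) k) := by
    ext i j
    rw [Matrix.one_apply]
    simp [e, Pi.single_apply, eq_comm]
  have h3 : Matrix.detRowAlternating (e k n) = Matrix.det (Matrix.of fun i j => e k n i j) := rfl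
  rw [h3, h2, Matrix.det_one]

noncomputable def φ :
    (ExteriorAlgebra k (Fin n → k) ⊗[k] MvPolynomial (Fin n) k) →ₗ[k] k :=
  (TensorProduct.lid k k).toLinearMap ∘ₗ
    TensorProduct.map (ψ k n) (MvPolynomial.aeval (fun _ : Fin n => (0:k))).toLinearMap

lemma φ_tmul (ω : ExteriorAlgebra k (Fin n → k)) (f : MvPolynomial (Fin n) k) :
    φ k n (ω ⊗ₜ f) = ψ k n ω * MvPolynomial.aeval (fun _ : Fin n => (0:k)) f := by
  simp [φ, smul_eq_mul]

lemma φ_d_zero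
    (d : (ExteriorAlgebra k (Fin n → k) ⊗[k] MvPolynomial (Fin n) k) →ₗ[k]
         (ExteriorAlgebra k (Fin n → k) ⊗[k] MvPolynomial (Fin n) k))
    (hd : ∀ (ω : ExteriorAlgebra k (Fin n → k)) (f : MvPolynomial (Fin n) k),
      d (ω ⊗ₜ f) = ∑ i, (eV k n i * ω) ⊗ₜ (X i * f))
    (z : ExteriorAlgebra k (Fin n → k) ⊗[k] MvPolynomial (Fin n) k) :
    φ k n (d z) = 0 := by
  induction z with
  | zero => simp
  | add a b ha hb => rw [map_add, map_add, ha, hb, add_zero]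
  | tmul ω f =>
    rw [hd, map_sum]
    refine Finset.sum_eq_zero fun i _ => ?_
    have h0 : (MvPolynomial.aeval fun _ : Fin n => (0:k)) (X i * f) = 0 := by
      rw [map_mul, MvPolynomial.aeval_X]
      exact zero_mul _
    rw [φ_tmul, h0, mul_zero]

lemma tau_eq : koszulTau k n = bT k n (List.finRange n) 0 := by
  rw [koszulTau, bT, bE, List.ofFn_eq_map]
  congr 1

lemma φ_tau : φ k n (koszulTau k n) = 1 := by
  rw [tau_eq, bT, φ_tmul, ψ_top, one_mul, monomial_zero', MvPolynomial.C_1, map_one]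

end KoszulAux

namespace KoszulAux

open MvPolynomial

variable (k : Type*) [Field k] (n : ℕ)

lemma eV_swap (i j : Fin n) (x : ExteriorAlgebra k (Fin n → k)) :
    eV k n j * (eV k n i * x) = -(eV k n i * (eV k n j * x)) := by
  have h := ExteriorAlgebra.ι_add_mul_swap (R := k) (e k n j) (e k n i)
  have hij : eV k n j * eV k n i = -(eV k n i * eV k n j) := by
    rw [eq_neg_iff_add_eq_zero]; simpa [eV] using h
  rw [← mul_assoc, hij, neg_mul, mul_assoc]

lemma d_sq [CharZero k]
    (d : (ExteriorAlgebra k (Fin n → k) ⊗[k] MvPolynomial (Fin n) k) →ₗ[k]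
         (ExteriorAlgebra k (Fin n → k) ⊗[k] MvPolynomial (Fin n) k))
    (hd : ∀ (ω : ExteriorAlgebra k (Fin n → k)) (f : MvPolynomial (Fin n) k),
      d (ω ⊗ₜ f) = ∑ i, (eV k n i * ω) ⊗ₜ (X i * f))
    (z : ExteriorAlgebra k (Fin n → k) ⊗[k] MvPolynomial (Fin n) k) :
    d (d z) = 0 := by
  induction z with
  | zero => simp
  | add a b ha hb => rw [map_add, map_add, ha, hb, add_zero]
  | tmul ω f =>
    rw [hd, map_sum]
    rw [Finset.sum_congr rfl fun i _ => hd (eV k n i * ω) (X i * f)]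
    set S := ∑ i, ∑ j, (eV k n j * (eV k n i * ω)) ⊗ₜ[k] (X j * (X i * f)) with hS
    have hneg : S = -S := by
      nth_rewrite 1 [hS, Finset.sum_comm]
      rw [show -S = ∑ i, ∑ j, -((eV k n j * (eV k n i * ω)) ⊗ₜ[k] (X j * (X i * f))) by
        rw [hS]; simp [Finset.sum_neg_distrib]]
      refine Finset.sum_congr rfl fun i _ => Finset.sum_congr rfl fun j _ => ?_
      rw [eV_swap, neg_tmul, neg_inj]
      congr 1
      ring
    have h2 : (2 : k) • S = 0 := by
      rw [two_smul]
      nth_rewrite 2 [hneg]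
      exact add_neg_cancel S
    calc S = (2:k)⁻¹ • ((2:k) • S) := by
          rw [smul_smul, inv_mul_cancel₀ (two_ne_zero), one_smul]
      _ = 0 := by rw [h2, smul_zero]

lemma d_tau
    (d : (ExteriorAlgebra k (Fin n → k) ⊗[k] MvPolynomial (Fin n) k) →ₗ[k]
         (ExteriorAlgebra k (Fin n → k) ⊗[k] MvPolynomial (Fin n) k))
    (hd : ∀ (ω : ExteriorAlgebra k (Fin n → k)) (f : MvPolynomial (Fin n) k),
      d (ω ⊗ₜ f) = ∑ i, (eV k n i * ω) ⊗ₜ (X i * f)) :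
    d (koszulTau k n) = 0 := by
  rw [tau_eq, bT, hd]
  refine Finset.sum_eq_zero fun i _ => ?_
  have hb : bE k n (List.finRange n)
      = (List.ofFn fun j : Fin n => ExteriorAlgebra.ι k (e k n j)).prod := by
    rw [List.ofFn_eq_map]; rfl
  have h0 : eV k n i * bE k n (List.finRange n) = 0 := by
    rw [hb]; exact ExteriorAlgebra.ι_mul_prod_list (R := k) (e k n) i
  rw [h0, zero_tmul]

lemma bT_cval_zero [CharZero k] (l : List (Fin n)) (m : Fin n →₀ ℕ)
    (h : cval k n l m = 0) : bT k n l m ∈ k ∙ koszulTau k n := by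
  rw [cval, sub_eq_zero, ← Nat.cast_add, Nat.cast_inj] at h
  rcases Nat.eq_zero_or_pos (∑ i, m i) with hq | hq
  · have hm : m = 0 := by
      ext j
      exact (Finset.sum_eq_zero_iff.1 hq) j (Finset.mem_univ j)
    subst hm
    simp only [Finsupp.coe_zero, Pi.zero_apply, Finset.sum_const_zero, add_zero] at h
    by_cases hnd : l.Nodup
    · have hsub : List.Subperm l (List.finRange n) := hnd.subperm fun x _ => List.mem_finRange x
      have hperm : l.Perm (List.finRange n) :=
        hsub.perm_of_length_le (by rw [List.length_finRange]; omega)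
      obtain ⟨c, hc⟩ := bE_perm k n hperm
      rw [Submodule.mem_span_singleton]
      refine ⟨c, ?_⟩
      rw [tau_eq, bT, bT, hc, smul_tmul']
    · rw [bT, bE_dup k n hnd, zero_tmul]
      exact Submodule.zero_mem _
  · have hlen : n < l.length := by omega
    rw [bT, bE_len_gt k n l hlen, zero_tmul]
    exact Submodule.zero_mem _

end KoszulAux

open KoszulAux in
set_option maxHeartbeats 1000000 in
/-- For the `k`-linear operator `d` on `M = Λ(kⁿ) ⊗ k[X₁,…,Xₙ]` determined by
`d(ω ⊗ f) = ∑ᵢ (eᵢ ∧ ω) ⊗ (Xᵢ·f)` one has: (1) `d ∘ d = 0`; (2) `τ = (e₁∧⋯∧eₙ) ⊗ 1` lies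
in the kernel of `d`; (3) `τ` does not lie in the range of `d`; and (4) the kernel of `d`
is the internal direct sum of the range of `d` and the line `k·τ` (so the cohomology
`ker d / im d` is one-dimensional). -/
theorem koszul_semidensities (k : Type*) [Field k] [CharZero k] (n : ℕ)
    (d : (ExteriorAlgebra k (Fin n → k) ⊗[k] MvPolynomial (Fin n) k) →ₗ[k]
         (ExteriorAlgebra k (Fin n → k) ⊗[k] MvPolynomial (Fin n) k))
    (hd : ∀ (ω : ExteriorAlgebra k (Fin n → k)) (f : MvPolynomial (Fin n) k),
      d (ω ⊗ₜ f) = ∑ i, (ExteriorAlgebra.ι k (Pi.single i (1 : k)) * ω) ⊗ₜ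
        (MvPolynomial.X i * f)) :
    d ∘ₗ d = 0 ∧
    koszulTau k n ∈ LinearMap.ker d ∧
    koszulTau k n ∉ LinearMap.range d ∧
    LinearMap.ker d = LinearMap.range d ⊔ (k ∙ koszulTau k n) ∧
    Disjoint (LinearMap.range d) (k ∙ koszulTau k n) := by
  classical
  have hd' : ∀ (ω : ExteriorAlgebra k (Fin n → k)) (f : MvPolynomial (Fin n) k),
      d (ω ⊗ₜ f) = ∑ i, (eV k n i * ω) ⊗ₜ (MvPolynomial.X i * f) := hd
  have hdd : ∀ z, d (d z) = 0 := d_sq k n d hd'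
  have hddc : d ∘ₗ d = 0 := by
    apply LinearMap.ext
    intro z
    exact hdd z
  have hτker : koszulTau k n ∈ LinearMap.ker d := LinearMap.mem_ker.2 (d_tau k n d hd')
  have hφd : ∀ z, φ k n (d z) = 0 := φ_d_zero k n d hd'
  have hτnotrange : koszulTau k n ∉ LinearMap.range d := by
    rintro ⟨y, hy⟩
    have h1 : φ k n (koszulTau k n) = 0 := by rw [← hy]; exact hφd y
    rw [φ_tau] at h1
    exact one_ne_zero h1
  have hdisj : Disjoint (LinearMap.range d) (k ∙ koszulTau k n) := by
    rw [Submodule.disjoint_def]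
    intro z hz1 hz2
    obtain ⟨a, rfl⟩ := Submodule.mem_span_singleton.1 hz2
    obtain ⟨y, hy⟩ := hz1
    have ha : a = 0 := by
      have h1 : φ k n (a • koszulTau k n) = a := by rw [map_smul, φ_tau, smul_eq_mul, mul_one]
      rw [← hy, hφd] at h1
      exact h1.symm
    rw [ha, zero_smul]
  -- the eigenspace machinery
  set Gop : (ExteriorAlgebra k (Fin n → k) ⊗[k] MvPolynomial (Fin n) k) →ₗ[k]
      (ExteriorAlgebra k (Fin n → k) ⊗[k] MvPolynomial (Fin n) k) :=
    d ∘ₗ hop k n + hop k n ∘ₗ d with hGop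
  have hGapply : ∀ z, Gop z = d (hop k n z) + hop k n (d z) := fun z => rfl
  have hGd : ∀ z, Gop (d z) = d (Gop z) := by
    intro z
    have h1 : Gop (d z) = d (hop k n (d z)) := by
      rw [hGapply, hdd, map_zero, add_zero]
    rw [h1, hGapply, map_add, hdd, zero_add]
  set V : k → Submodule k (ExteriorAlgebra k (Fin n → k) ⊗[k] MvPolynomial (Fin n) k) :=
    fun c => Submodule.span k
      {z | ∃ p : List (Fin n) × (Fin n →₀ ℕ), cval k n p.1 p.2 = c ∧ z = bT k n p.1 p.2}
    with hV
  have hVeig : ∀ c, ∀ z ∈ V c, Gop z = c • z := by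
    intro c
    have : V c ≤ LinearMap.ker (Gop - c • LinearMap.id) := by
      rw [hV]
      refine Submodule.span_le.2 ?_
      rintro _ ⟨⟨l, m⟩, hc, rfl⟩
      rw [SetLike.mem_coe, LinearMap.mem_ker, LinearMap.sub_apply, LinearMap.smul_apply,
        LinearMap.id_apply, sub_eq_zero, hGapply, G_bT k n d hd' l m, hc]
    intro z hz
    have h := this hz
    rw [LinearMap.mem_ker, LinearMap.sub_apply, LinearMap.smul_apply, LinearMap.id_apply,
      sub_eq_zero] at h
    exact h
  have hker_le : LinearMap.ker d ≤ LinearMap.range d ⊔ (k ∙ koszulTau k n) := by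
    intro x hx
    rw [LinearMap.mem_ker] at hx
    have hxmem : x ∈ ⨆ c : k, V c := by
      refine (Submodule.span_le.2 ?_) (bT_span k n x)
      rintro _ ⟨⟨l, m⟩, rfl⟩
      exact Submodule.mem_iSup_of_mem (cval k n l m)
        (Submodule.subset_span ⟨(l, m), rfl, rfl⟩)
    obtain ⟨F, hF, hFs⟩ := (Submodule.mem_iSup_iff_exists_finsupp V x).1 hxmem
    have hdF0 : ∀ c ∈ F.support, d (F c) = 0 := by
      refine eig_sum_zero k Gop F.support (fun c => d (F c)) ?_ ?_
      · intro c _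
        rw [hGd, hVeig c (F c) (hF c), map_smul]
      · rw [← map_sum]
        have : ∑ c ∈ F.support, F c = x := hFs
        rw [this, hx]
    have hmem : ∀ c ∈ F.support, F c ∈ LinearMap.range d ⊔ (k ∙ koszulTau k n) := by
      intro c hc
      by_cases hc0 : c = 0
      · subst hc0
        refine Submodule.mem_sup_right ?_
        have : V 0 ≤ k ∙ koszulTau k n := by
          rw [hV]
          refine Submodule.span_le.2 ?_
          rintro _ ⟨⟨l, m⟩, h0, rfl⟩
          exact bT_cval_zero k n l m h0
        exact this (hF 0)
      · refine Submodule.mem_sup_left ?_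
        have heig : Gop (F c) = c • F c := hVeig c (F c) (hF c)
        rw [hGapply, hdF0 c hc, map_zero, add_zero] at heig
        refine ⟨c⁻¹ • hop k n (F c), ?_⟩
        rw [map_smul, heig, smul_smul, inv_mul_cancel₀ hc0, one_smul]
    have : x = ∑ c ∈ F.support, F c := hFs.symm
    rw [this]
    exact Submodule.sum_mem _ hmem
  have hker_eq : LinearMap.ker d = LinearMap.range d ⊔ (k ∙ koszulTau k n) := by
    refine le_antisymm hker_le (sup_le ?_ ?_)
    · rintro _ ⟨y, rfl⟩
      exact LinearMap.mem_ker.2 (hdd y)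
    · rw [Submodule.span_le]
      rintro _ rfl
      exact hτker
  exact ⟨hddc, hτker, hτnotrange, hker_eq, hdisj⟩
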